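/- Let A be a simple supersingular abelian variety of odd dimension d > 2 over a finite field k with Frobenius π and characteristic polynomial f = g^e (g irreducible). Then e = 1, i.e., f is irreducible, and consequently End_k(A) ⊗ ℚ = ℚ(π) is commutative; the argument reduces to: if 2d = e·[ℚ(π):ℚ] with d odd, d > 2, and π a supersingular q-number, then [ℚ(π):ℚ] is even or [ℚ(π):ℚ(π²)]·φ(m/gcd(2,m)) is even, forcing e = 1. -/

import Mathlib

set_option synthInstance.maxHeartbeats 1000000
set_option maxHeartbeats 1000000

/-- Let `A` be a simple supersingular abelian variety of odd dimension `d > 2`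
over a finite field `k` with Frobenius `π = ζ_m^ν √q` and characteristic polynomial `f = g^e`.
Then `e = 1`.  The argument reduces to the following arithmetic statement: if `2d = e·[ℚ(π):ℚ]`
with `d` odd, `d > 2`, `e ∈ {1,2}` (as always holds for a simple abelian variety over a finite
field), and `π` a supersingular `q`-number, then `[ℚ(π):ℚ]` is even, forcing `e = 1`. -/
theorem e_eq_one_of_odd_dim (p k q m d e : ℕ) (hp : p.Prime) (hq : q = p ^ k) (hk : 0 < k)
    (hm : 0 < m) (ζ : ℂ) (hζ : IsPrimitiveRoot ζ m)
    (π : ℂ) (hπ : π = ζ * (Real.sqrt q : ℂ))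
    (hd : Odd d) (hd2 : 2 < d) (he : e = 1 ∨ e = 2)
    (heq : 2 * d = e * Module.finrank ℚ ↥(IntermediateField.adjoin ℚ ({π} : Set ℂ))) :
    e = 1 := by
  rcases he with he | he
  · exact he
  exfalso
  subst he
  set E := IntermediateField.adjoin ℚ ({π} : Set ℂ) with hE
  have hdE : d = Module.finrank ℚ E := by omega
  -- basic facts about q
  have hqpos : 0 < q := by rw [hq]; exact pow_pos hp.pos k
  have hq0 : (0:ℝ) ≤ (q:ℝ) := by positivity
  have hqC : ((Real.sqrt q : ℝ) : ℂ) ^ 2 = (q:ℂ) := by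
    norm_cast
    exact Real.sq_sqrt hq0
  have hqne : (q:ℂ) ≠ 0 := Nat.cast_ne_zero.mpr hqpos.ne'
  have hπ2 : π ^ 2 = ζ ^ 2 * (q:ℂ) := by rw [hπ, mul_pow, hqC]
  -- the field F = ℚ(ζ²)
  set F := IntermediateField.adjoin ℚ ({ζ ^ 2} : Set ℂ) with hF
  have hπE : π ∈ E := IntermediateField.mem_adjoin_simple_self ℚ π
  have hqE : (q:ℂ) ∈ E := E.natCast_mem q
  have hζ2E : ζ ^ 2 ∈ E := by
    have : ζ ^ 2 = π ^ 2 * (q:ℂ)⁻¹ := by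
      field_simp [hπ2]
      exact hπ2.symm
    rw [this]
    exact E.mul_mem (E.pow_mem hπE 2) (E.inv_mem hqE)
  have hFE : F ≤ E := by
    rw [hF, IntermediateField.adjoin_le_iff]
    simpa using hζ2E
  have hζ2F : ζ ^ 2 ∈ F := IntermediateField.mem_adjoin_simple_self ℚ (ζ ^ 2)
  have hπ2F : π ^ 2 ∈ F := by
    rw [hπ2]
    exact F.mul_mem hζ2F (F.natCast_mem q)
  -- π has degree ≤ 2 over F
  have hEF : IntermediateField.extendScalars hFE = IntermediateField.adjoin F ({π} : Set ℂ) :=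
    IntermediateField.extendScalars_adjoin hFE
  set c : F := ⟨π ^ 2, hπ2F⟩ with hc
  have haev : Polynomial.aeval π (Polynomial.X ^ 2 - Polynomial.C c) = 0 := by
    simp [Polynomial.aeval_def, IntermediateField.algebraMap_apply]
    exact sub_eq_zero.mpr rfl
  have hmon : (Polynomial.X ^ 2 - Polynomial.C c).Monic :=
    Polynomial.monic_X_pow_sub_C c two_ne_zero
  have hint : IsIntegral F π := ⟨_, hmon, haev⟩
  have hdeg2 : (minpoly F π).natDegree ≤ 2 := by
    have := Polynomial.natDegree_le_of_dvd (minpoly.dvd F π haev) hmon.ne_zero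
    rwa [Polynomial.natDegree_X_pow_sub_C] at this
  have hrel : F.relfinrank E ≤ 2 := by
    rw [IntermediateField.relfinrank_eq_finrank_of_le hFE, hEF,
      IntermediateField.adjoin.finrank hint]
    exact hdeg2
  -- degree of F over ℚ is a totient
  obtain ⟨m', hm'pos, hζ2⟩ : ∃ m', 0 < m' ∧ IsPrimitiveRoot (ζ ^ 2) m' := by
    rcases Nat.even_or_odd m with hm2 | hm2
    · exact ⟨m / 2, Nat.div_pos (Nat.le_of_dvd hm hm2.two_dvd) two_pos,
        hζ.pow_of_dvd two_ne_zero hm2.two_dvd⟩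
    · exact ⟨m, hm, hζ.pow_of_coprime 2 (Nat.coprime_two_left.mpr hm2)⟩
  have hζ2int : IsIntegral ℚ (ζ ^ 2) := (hζ2.isIntegral hm'pos).tower_top
  have hFdeg : Module.finrank ℚ F = Nat.totient m' := by
    rw [hF, IntermediateField.adjoin.finrank hζ2int,
      ← Polynomial.cyclotomic_eq_minpoly_rat hζ2 hm'pos, Polynomial.natDegree_cyclotomic]
  -- tower
  have htower : Module.finrank ℚ F * F.relfinrank E = Module.finrank ℚ E :=
    IntermediateField.finrank_bot_mul_relfinrank hFE
  rw [hFdeg, ← hdE] at htower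
  -- arithmetic conclusion
  have hodd : ¬ Even d := Nat.not_even_iff_odd.mpr hd
  have hm'le : m' ≤ 2 := by
    by_contra h
    have hev : Even (Nat.totient m') := Nat.totient_even (by omega)
    exact hodd (htower ▸ hev.mul_right _)
  have h1 : Nat.totient m' = 1 := by interval_cases m' <;> decide
  rw [h1, one_mul] at htower
  omega
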